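/- Meyers' variant of Flett's theorem (Theorem 2.3): Let a < b and let f : ℝ → ℝ be differentiable at every point of the closed interval [a, b], with f'(a) = f'(b). Then there exists ξ ∈ (a, b) such that f'(ξ) = (f(b) - f(ξ)) / (b - ξ). -/

import Mathlib

open Set Filter Topology

private lemma meyers_aux (f f' : ℝ → ℝ) (a b : ℝ) (hab : a < b)
    (hf : ∀ x ∈ Set.Icc a b, HasDerivWithinAt f (f' x) (Set.Icc a b) x)
    (hend : f' a = f' b)
    (hge : f' b ≤ (f b - f a) / (b - a)) :
    ∃ ξ ∈ Set.Ioo a b, f' ξ = (f b - f ξ) / (b - ξ) := by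
  set q : ℝ → ℝ := fun x => (f b - f x) / (b - x) with hq_def
  set g : ℝ → ℝ := fun x => if x = b then f' b else q x with hg_def
  have hba : (b : ℝ) - a ≠ 0 := sub_ne_zero.2 hab.ne'
  have hga : g a = q a := by simp [hg_def, hab.ne]
  have hgb : g b = f' b := by simp [hg_def]
  -- interior derivative of g
  have hgderiv : ∀ x ∈ Ioo a b, HasDerivAt g ((q x - f' x) / (b - x)) x := by
    intro x hx
    have hxb : (b : ℝ) - x ≠ 0 := sub_ne_zero.2 (ne_of_gt hx.2)
    have hfx : HasDerivAt f (f' x) x :=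
      (hf x (Ioo_subset_Icc_self hx)).hasDerivAt (Icc_mem_nhds hx.1 hx.2)
    have hq : HasDerivAt q ((q x - f' x) / (b - x)) x := by
      have h1 : HasDerivAt (fun y => f b - f y) (-f' x) x := by
        simpa using hfx.const_sub (f b)
      have h2 : HasDerivAt (fun y => b - y) (-1 : ℝ) x := by
        simpa using (hasDerivAt_id' x).const_sub b
      have h3 : HasDerivAt (fun y => (f b - f y) / (b - y)) _ x := h1.div h2 hxb
      convert h3 using 1
      simp only [q]
      field_simp
      ring
    refine hq.congr_of_eventuallyEq ?_
    filter_upwards [eventually_ne_nhds (ne_of_lt hx.2)] with y hy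
    simp [hg_def, hy]
  -- continuity of g on Icc a b
  have hgcont : ContinuousOn g (Icc a b) := by
    intro x hx
    rcases eq_or_lt_of_le hx.2 with hxb | hxb
    · subst hxb
      rw [← continuousWithinAt_diff_self]
      have hs := hasDerivWithinAt_iff_tendsto_slope.1 (hf x (right_mem_Icc.2 hab.le))
      have heq : ∀ y ∈ Icc a x \ {x}, g y = slope f x y := by
        intro y hy
        have hyx : y ≠ x := hy.2
        simp only [hg_def, hq_def, if_neg hyx]
        rw [slope_def_field, ← neg_sub (f y), ← neg_sub y, neg_div_neg_eq]
      have : Tendsto g (𝓝[Icc a x \ {x}] x) (𝓝 (f' x)) := by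
        refine hs.congr' ?_
        filter_upwards [self_mem_nhdsWithin] with y hy
        exact (heq y hy).symm
      simpa [ContinuousWithinAt, hgb] using this
    · have hne : (b : ℝ) - x ≠ 0 := sub_ne_zero.2 hxb.ne'
      have hc : ContinuousWithinAt q (Icc a b) x :=
        (continuousWithinAt_const.sub (hf x hx).continuousWithinAt).div
          (continuousWithinAt_const.sub continuousWithinAt_id) hne
      refine hc.congr_of_eventuallyEq ?_ (by simp [hg_def, hxb.ne])
      filter_upwards [eventually_nhdsWithin_of_eventually_nhds
        (eventually_ne_nhds hxb.ne)] with y hy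
      simp [hg_def, hy]
  -- key: derivative value zero gives the conclusion
  have hconc : ∀ ξ ∈ Ioo a b, (q ξ - f' ξ) / (b - ξ) = 0 → f' ξ = (f b - f ξ) / (b - ξ) := by
    intro ξ hξ h0
    have hξb : (b : ℝ) - ξ ≠ 0 := sub_ne_zero.2 (ne_of_gt hξ.2)
    have := (div_eq_zero_iff.1 h0).resolve_right hξb
    have h7 : q ξ = f' ξ := by linarith [sub_eq_zero.1 this]
    exact h7.symm
  rcases eq_or_lt_of_le hge with heq | hlt
  · -- Rolle case
    have hI : g a = g b := by
      rw [hga, hgb]; exact heq.symm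
    obtain ⟨ξ, hξ, h0⟩ := exists_hasDerivAt_eq_zero hab hgcont hI hgderiv
    exact ⟨ξ, hξ, hconc ξ hξ h0⟩
  · -- strict case: max of g is interior
    -- one-sided derivative of q at a is positive, so g exceeds g a somewhere in Ioo
    obtain ⟨x₀, hx₀, hgx₀⟩ : ∃ x₀ ∈ Ioo a b, g a < g x₀ := by
      have hqa : HasDerivWithinAt q ((q a - f' a) / (b - a)) (Icc a b) a := by
        have h1 : HasDerivWithinAt (fun y => f b - f y) (-f' a) (Icc a b) a := by
          simpa using (hf a (left_mem_Icc.2 hab.le)).const_sub (f b)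
        have h2 : HasDerivWithinAt (fun y => b - y) (-1 : ℝ) (Icc a b) a := by
          simpa using (hasDerivWithinAt_id a (Icc a b)).const_sub b
        have h3 : HasDerivWithinAt (fun y => (f b - f y) / (b - y)) _ (Icc a b) a := h1.div h2 hba
        convert h3 using 1
        simp only [q]
        field_simp
        ring
      have hD : 0 < (q a - f' a) / (b - a) := by
        apply div_pos _ (by linarith)
        have : f' b < q a := by simpa [hq_def] using hlt
        rw [hend]; linarith
      have hslope := hasDerivWithinAt_iff_tendsto_slope.1 hqa
      have hev : ∀ᶠ y in 𝓝[Icc a b \ {a}] a, 0 < slope q a y :=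
        hslope (eventually_gt_nhds hD)
      have hIoo : Ioo a b ∈ 𝓝[Icc a b \ {a}] a := by
        rw [Icc_diff_left]
        exact mem_nhdsWithin.2 ⟨Iio b, isOpen_Iio, hab, fun y hy => ⟨hy.2.1, hy.1⟩⟩
      haveI : (𝓝[Icc a b \ {a}] a).NeBot := by
        rw [Icc_diff_left]
        exact mem_closure_iff_nhdsWithin_neBot.1
          (by rw [closure_Ioc hab.ne]; exact left_mem_Icc.2 hab.le)
      obtain ⟨y, hy0, hyIoo⟩ := (hev.and (eventually_of_mem hIoo (fun y hy => hy))).exists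
      refine ⟨y, hyIoo, ?_⟩
      have hya : 0 < y - a := sub_pos.2 hyIoo.1
      have h5 : slope q a y * (y - a) = q y - q a := by
        rw [slope_def_field]
        field_simp
      have h6 : 0 < q y - q a := by nlinarith [mul_pos hy0 hya]
      have hgy : g y = q y := by simp [hg_def, ne_of_lt hyIoo.2]
      rw [hga, hgy]; linarith
    have hcompact : IsCompact (Icc a b) := isCompact_Icc
    obtain ⟨ξ, hξmem, hξmax⟩ := hcompact.exists_isMaxOn (nonempty_Icc.2 hab.le) hgcont
    have hξa : ξ ≠ a := by
      intro h; subst h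
      exact absurd (hξmax (Ioo_subset_Icc_self hx₀)) (not_le.2 hgx₀)
    have hξb : ξ ≠ b := by
      intro h
      have h2 := hξmax (Ioo_subset_Icc_self hx₀)
      have h3 : f' b < q a := hlt
      rw [h, hgb] at h2
      rw [hga] at hgx₀
      simp only [Set.mem_setOf_eq] at h2
      linarith
    have hξIoo : ξ ∈ Ioo a b := ⟨lt_of_le_of_ne hξmem.1 (Ne.symm hξa), lt_of_le_of_ne hξmem.2 hξb⟩
    have hloc : IsLocalMax g ξ := hξmax.isLocalMax (Icc_mem_nhds hξIoo.1 hξIoo.2)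
    have h0 := hloc.hasDerivAt_eq_zero (hgderiv ξ hξIoo)
    exact ⟨ξ, hξIoo, hconc ξ hξIoo h0⟩

/-- Meyers' variant of Flett's theorem (Theorem 2.3). -/
theorem meyers_variant_2_3 (f f' : ℝ → ℝ) (a b : ℝ) (hab : a < b)
    (hf : ∀ x ∈ Set.Icc a b, HasDerivWithinAt f (f' x) (Set.Icc a b) x)
    (hend : f' a = f' b) :
    ∃ ξ ∈ Set.Ioo a b, f' ξ = (f b - f ξ) / (b - ξ) := by
  have hba : (b : ℝ) - a ≠ 0 := sub_ne_zero.2 hab.ne'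
  rcases le_total (f' b) ((f b - f a) / (b - a)) with h | h
  · exact meyers_aux f f' a b hab hf hend h
  · obtain ⟨ξ, hξ, hval⟩ := meyers_aux (fun x => -f x) (fun x => -f' x) a b hab
      (fun x hx => (hf x hx).neg) (by show -f' a = -f' b; rw [hend])
      (by
        have : (-f b - -f a) / (b - a) = -((f b - f a) / (b - a)) := by ring
        rw [this]; linarith)
    refine ⟨ξ, hξ, ?_⟩
    have hξb : (b : ℝ) - ξ ≠ 0 := sub_ne_zero.2 (ne_of_gt hξ.2)
    have h2 : (-f b - -f ξ) / (b - ξ) = -((f b - f ξ) / (b - ξ)) := by ring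
    rw [h2] at hval
    linarith
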